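/- Let K be a compact, perfectly normal topological space and X a real Banach space. If f ∈ C(K,X) with ‖f‖ = 1 is a ρ-left symmetric point of C(K,X), then f(k) = 0 for every k ∈ K with k ∉ M_f. -/

import Mathlib

open Filter Topology Set Metric NormedSpace

noncomputable section

/-- Birkhoff–James orthogonality: `x ⊥_B y` iff `‖x + t • y‖ ≥ ‖x‖` for all real `t`. -/
def BJOrth {E : Type*} [NormedAddCommGroup E] [NormedSpace ℝ E] (x y : E) : Prop :=
  ∀ t : ℝ, ‖x‖ ≤ ‖x + t • y‖

/-- The norm derivative `ρ'₊(x,y) = ‖x‖ · lim_{t→0⁺} (‖x+ty‖-‖x‖)/t`. -/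
def rhoPlus {E : Type*} [NormedAddCommGroup E] [NormedSpace ℝ E] (x y : E) : ℝ :=
  ‖x‖ * limUnder (𝓝[>] (0 : ℝ)) (fun t => (‖x + t • y‖ - ‖x‖) / t)

/-- The norm derivative `ρ'₋(x,y) = ‖x‖ · lim_{t→0⁻} (‖x+ty‖-‖x‖)/t`. -/
def rhoMinus {E : Type*} [NormedAddCommGroup E] [NormedSpace ℝ E] (x y : E) : ℝ :=
  ‖x‖ * limUnder (𝓝[<] (0 : ℝ)) (fun t => (‖x + t • y‖ - ‖x‖) / t)

/-- The norm derivative `ρ'(x,y) = (ρ'₊(x,y) + ρ'₋(x,y))/2`. -/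
def rhoDer {E : Type*} [NormedAddCommGroup E] [NormedSpace ℝ E] (x y : E) : ℝ :=
  (rhoPlus x y + rhoMinus x y) / 2

/-- `x` is an exposed point of the closed unit ball of `E`: there is a norm-one functional `f`
with `f x = 1` and `f u < 1` for every `u` in the ball with `u ≠ x`. -/
def ExposedPt {E : Type*} [NormedAddCommGroup E] [NormedSpace ℝ E] (x : E) : Prop :=
  ‖x‖ ≤ 1 ∧ ∃ f : E →L[ℝ] ℝ, ‖f‖ = 1 ∧ f x = 1 ∧ ∀ u : E, ‖u‖ ≤ 1 → u ≠ x → f u < 1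


namespace Stmt16Aux

variable {E : Type*} [NormedAddCommGroup E] [NormedSpace ℝ E]

lemma quot_mono (x y : E) {s t : ℝ} (hs : s ≠ 0) (ht : t ≠ 0) (hst : s ≤ t) :
    (‖x + s • y‖ - ‖x‖) / s ≤ (‖x + t • y‖ - ‖x‖) / t := by
  have hconv : ConvexOn ℝ (univ : Set ℝ) (fun t : ℝ => ‖x + t • y‖) := by
    have h := (convexOn_univ_norm (E := E)).comp_affineMap (AffineMap.lineMap x (x + y))
    have heq : (fun t : ℝ => ‖x + t • y‖)
        = (norm ∘ (AffineMap.lineMap x (x + y) : ℝ →ᵃ[ℝ] E)) := by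
      ext t
      simp [AffineMap.lineMap_apply, add_comm]
    rw [heq]
    simpa using h
  have := hconv.secant_mono (a := 0) (mem_univ _) (mem_univ _) (mem_univ _) hs ht hst
  simpa using this

lemma tendsto_quot_plus (x y : E) :
    Tendsto (fun t => (‖x + t • y‖ - ‖x‖) / t) (𝓝[>] (0 : ℝ))
      (𝓝 (sInf ((fun t => (‖x + t • y‖ - ‖x‖) / t) '' Ioi 0))) := by
  apply MonotoneOn.tendsto_nhdsGT
  · intro a ha b hb hab
    exact quot_mono x y (ne_of_gt ha) (ne_of_gt hb) hab
  · refine ⟨(‖x + (-1 : ℝ) • y‖ - ‖x‖) / (-1), ?_⟩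
    rintro _ ⟨t, ht, rfl⟩
    exact quot_mono x y (by norm_num) (ne_of_gt ht) (by linarith [mem_Ioi.mp ht])

lemma tendsto_quot_minus (x y : E) :
    Tendsto (fun t => (‖x + t • y‖ - ‖x‖) / t) (𝓝[<] (0 : ℝ))
      (𝓝 (sSup ((fun t => (‖x + t • y‖ - ‖x‖) / t) '' Iio 0))) := by
  apply MonotoneOn.tendsto_nhdsLT
  · intro a ha b hb hab
    exact quot_mono x y (ne_of_lt ha) (ne_of_lt hb) hab
  · refine ⟨(‖x + (1 : ℝ) • y‖ - ‖x‖) / 1, ?_⟩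
    rintro _ ⟨t, ht, rfl⟩
    exact quot_mono x y (ne_of_lt ht) (by norm_num) (by linarith [mem_Iio.mp ht])

lemma limUnder_plus_ge (x y : E) {c ε : ℝ} (hε : 0 < ε)
    (h : ∀ t : ℝ, 0 < t → t < ε → c ≤ (‖x + t • y‖ - ‖x‖) / t) :
    c ≤ limUnder (𝓝[>] (0 : ℝ)) (fun t => (‖x + t • y‖ - ‖x‖) / t) := by
  have ht := tendsto_quot_plus x y
  rw [ht.limUnder_eq]
  refine ge_of_tendsto ht ?_
  filter_upwards [Ioo_mem_nhdsGT hε] with t htm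
  exact h t htm.1 htm.2

lemma limUnder_minus_ge (x y : E) {c ε : ℝ} (hε : 0 < ε)
    (h : ∀ t : ℝ, -ε < t → t < 0 → c ≤ (‖x + t • y‖ - ‖x‖) / t) :
    c ≤ limUnder (𝓝[<] (0 : ℝ)) (fun t => (‖x + t • y‖ - ‖x‖) / t) := by
  have ht := tendsto_quot_minus x y
  rw [ht.limUnder_eq]
  refine ge_of_tendsto ht ?_
  filter_upwards [Ioo_mem_nhdsLT (show -ε < (0:ℝ) by linarith)] with t htm
  exact h t htm.1 htm.2

lemma limUnder_plus_eq_zero (x y : E) {ε : ℝ} (hε : 0 < ε)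
    (h : ∀ t : ℝ, 0 < t → t < ε → ‖x + t • y‖ = ‖x‖) :
    limUnder (𝓝[>] (0 : ℝ)) (fun t => (‖x + t • y‖ - ‖x‖) / t) = 0 := by
  apply Filter.Tendsto.limUnder_eq
  have hev : (fun t : ℝ => (0:ℝ)) =ᶠ[𝓝[>] (0:ℝ)] (fun t => (‖x + t • y‖ - ‖x‖) / t) := by
    filter_upwards [Ioo_mem_nhdsGT hε] with t htm
    simp [h t htm.1 htm.2]
  exact tendsto_const_nhds.congr' hev

lemma limUnder_minus_eq_zero (x y : E) {ε : ℝ} (hε : 0 < ε)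
    (h : ∀ t : ℝ, -ε < t → t < 0 → ‖x + t • y‖ = ‖x‖) :
    limUnder (𝓝[<] (0 : ℝ)) (fun t => (‖x + t • y‖ - ‖x‖) / t) = 0 := by
  apply Filter.Tendsto.limUnder_eq
  have hev : (fun t : ℝ => (0:ℝ)) =ᶠ[𝓝[<] (0:ℝ)] (fun t => (‖x + t • y‖ - ‖x‖) / t) := by
    filter_upwards [Ioo_mem_nhdsLT (show -ε < (0:ℝ) by linarith)] with t htm
    simp [h t htm.1 htm.2]
  exact tendsto_const_nhds.congr' hev

end Stmt16Aux
set_option maxHeartbeats 1000000 in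
theorem stmt16 {K X : Type*} [TopologicalSpace K] [CompactSpace K] [T2Space K]
    [PerfectlyNormalSpace K]
    [NormedAddCommGroup X] [NormedSpace ℝ X] [CompleteSpace X]
    (f : C(K, X)) (hf : ‖f‖ = 1)
    (hsym : ∀ g : C(K, X), rhoDer f g = 0 → rhoDer g f = 0) :
    ∀ k : K, k ∉ {j : K | ‖f j‖ = ‖f‖} → f k = 0 := by
  intro k₀ hk₀
  by_contra hne
  simp only [Set.mem_setOf_eq, hf] at hk₀
  have hfle : ∀ k, ‖f k‖ ≤ 1 := fun k => hf ▸ f.norm_coe_le_norm k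
  have hflt : ‖f k₀‖ < 1 := lt_of_le_of_ne (hfle k₀) hk₀
  set d : ℝ := 1 - ‖f k₀‖ with hd
  have hdpos : 0 < d := by simp only [hd]; linarith
  set φ : K → ℝ := fun k => min ((1 - ‖f k‖) / d) 1 with hφdef
  have hφcont : Continuous φ :=
    ((continuous_const.sub (map_continuous f).norm).div_const d).min continuous_const
  have hφ0 : ∀ k, 0 ≤ φ k := fun k =>
    le_min (div_nonneg (by linarith [hfle k]) hdpos.le) zero_le_one
  have hφ1 : ∀ k, φ k ≤ 1 := fun k => min_le_right _ _
  have hφle : ∀ k, φ k ≤ (1 - ‖f k‖) / d := fun k => min_le_left _ _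
  set g : C(K, X) := ⟨fun k => φ k • f k, hφcont.smul (map_continuous f)⟩ with hgdef
  have hgapp : ∀ k, g k = φ k • f k := fun k => rfl
  have hφk₀ : φ k₀ = 1 := by
    simp only [hφdef]
    rw [← hd, div_self hdpos.ne', min_self]
  have hgk₀ : g k₀ = f k₀ := by rw [hgapp, hφk₀, one_smul]
  have hgpos : 0 < ‖g‖ := by
    have h1 : g k₀ ≠ 0 := hgk₀ ▸ hne
    calc (0:ℝ) < ‖g k₀‖ := norm_pos_iff.mpr h1
    _ ≤ ‖g‖ := g.norm_coe_le_norm k₀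
  -- K is nonempty and f attains its norm
  have hKne : Nonempty K := by
    by_contra h
    have hf0 : f = 0 := by ext k; exact absurd ⟨k⟩ h
    rw [hf0] at hf; simp at hf
  obtain ⟨k₁, -, hk₁⟩ :=
    isCompact_univ.exists_isMaxOn Set.univ_nonempty (map_continuous f).norm.continuousOn
  have hfk₁ : ‖f k₁‖ = 1 := by
    refine le_antisymm (hfle k₁) ?_
    rw [← hf]
    exact (ContinuousMap.norm_le _ (norm_nonneg _)).mpr fun k => hk₁ (Set.mem_univ k)
  have hφk₁ : φ k₁ = 0 := by
    simp only [hφdef]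
    rw [hfk₁]
    norm_num
  -- g attains its norm
  obtain ⟨km, -, hkm⟩ :=
    isCompact_univ.exists_isMaxOn Set.univ_nonempty (map_continuous g).norm.continuousOn
  have hgnorm : ‖g‖ = ‖g km‖ :=
    le_antisymm ((ContinuousMap.norm_le _ (norm_nonneg _)).mpr fun k => hkm (Set.mem_univ k))
      (g.norm_coe_le_norm km)
  have hgn : ‖g‖ = φ km * ‖f km‖ := by
    rw [hgnorm, hgapp, norm_smul, Real.norm_eq_abs, abs_of_nonneg (hφ0 km)]
  have hfkm : ‖g‖ ≤ ‖f km‖ := by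
    rw [hgn]
    nlinarith [hφ1 km, norm_nonneg (f km), hφ0 km]
  -- pointwise formulas
  have hfg : ∀ (t : ℝ) (k : K), (f + t • g) k = (1 + t * φ k) • f k := by
    intro t k
    rw [ContinuousMap.add_apply, ContinuousMap.smul_apply, hgapp, smul_smul, add_smul, one_smul]
  have hgf : ∀ (t : ℝ) (k : K), (g + t • f) k = (φ k + t) • f k := by
    intro t k
    rw [ContinuousMap.add_apply, ContinuousMap.smul_apply, hgapp, add_smul]
  -- Claim 1 : ‖f + t g‖ = 1 for small |t|
  have hεpos : 0 < min 1 d := lt_min one_pos hdpos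
  have claim1 : ∀ t : ℝ, |t| ≤ min 1 d → ‖f + t • g‖ = 1 := by
    intro t ht
    have ht1 : -1 ≤ t ∧ t ≤ 1 := abs_le.mp (le_trans ht (min_le_left _ _))
    have htd : t ≤ d := le_trans (le_abs_self t) (le_trans ht (min_le_right _ _))
    apply le_antisymm
    · refine (ContinuousMap.norm_le _ zero_le_one).mpr fun k => ?_
      rw [hfg t k, norm_smul, Real.norm_eq_abs]
      rcases le_or_gt 0 t with h0 | h0
      · have h2 : t * φ k ≤ 1 - ‖f k‖ := by
          calc t * φ k ≤ t * ((1 - ‖f k‖) / d) :=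
                mul_le_mul_of_nonneg_left (hφle k) h0
          _ ≤ d * ((1 - ‖f k‖) / d) :=
                mul_le_mul_of_nonneg_right htd (div_nonneg (by linarith [hfle k]) hdpos.le)
          _ = 1 - ‖f k‖ := by field_simp
        have h3 : (0:ℝ) ≤ 1 + t * φ k := by nlinarith [hφ0 k]
        rw [abs_of_nonneg h3]
        nlinarith [mul_le_mul_of_nonneg_right h2 (norm_nonneg (f k)),
          sq_nonneg (1 - ‖f k‖), norm_nonneg (f k), hfle k]
      · have h4 : |1 + t * φ k| ≤ 1 := by
          rw [abs_le]
          constructor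
          · nlinarith [hφ0 k, hφ1 k, ht1.1,
              mul_nonneg (by linarith : (0:ℝ) ≤ -t) (by linarith [hφ1 k] : (0:ℝ) ≤ 1 - φ k)]
          · nlinarith [mul_nonpos_of_nonpos_of_nonneg h0.le (hφ0 k)]
        calc |1 + t * φ k| * ‖f k‖ ≤ 1 * ‖f k‖ :=
              mul_le_mul_of_nonneg_right h4 (norm_nonneg _)
        _ ≤ 1 := by rw [one_mul]; exact hfle k
    · calc (1:ℝ) = ‖(f + t • g) k₁‖ := by
            rw [hfg t k₁, hφk₁, mul_zero, add_zero, one_smul, hfk₁]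
      _ ≤ ‖f + t • g‖ := (f + t • g).norm_coe_le_norm k₁
  -- hence rhoDer f g = 0
  have hrfg : rhoDer f g = 0 := by
    have hplus := Stmt16Aux.limUnder_plus_eq_zero f g hεpos (fun t h1 h2 => by
      rw [claim1 t (by rw [abs_of_pos h1]; exact h2.le), hf])
    have hminus := Stmt16Aux.limUnder_minus_eq_zero f g hεpos (fun t h1 h2 => by
      rw [claim1 t (by rw [abs_of_neg h2]; linarith), hf])
    simp [rhoDer, rhoPlus, rhoMinus, hplus, hminus]
  have hrgf := hsym g hrfg
  -- Claim 2 : rhoDer g f > 0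
  set c : ℝ := ‖g‖ / 2 with hc
  have hcpos : 0 < c := by positivity
  have hgle1 : ‖g‖ ≤ 1 := by
    refine (ContinuousMap.norm_le _ zero_le_one).mpr fun k => ?_
    rw [hgapp, norm_smul, Real.norm_eq_abs, abs_of_nonneg (hφ0 k)]
    nlinarith [hfle k, hφ1 k, hφ0 k, norm_nonneg (f k)]
  set ε₀ : ℝ := c / (1 + c) with hε₀
  have hε₀pos : 0 < ε₀ := div_pos hcpos (by linarith)
  have hε₀eq : ε₀ * (1 + c) = c := div_mul_cancel₀ _ (by linarith : (1:ℝ) + c ≠ 0)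
  have hε₀c : ε₀ ≤ c := div_le_self hcpos.le (by linarith)
  have claim2p : ∀ t : ℝ, 0 < t → c ≤ (‖g + t • f‖ - ‖g‖) / t := by
    intro t ht
    rw [le_div_iff₀ ht]
    have h1 : ‖g‖ + t * c ≤ ‖(g + t • f) km‖ := by
      rw [hgf t km, norm_smul, Real.norm_eq_abs,
        abs_of_nonneg (by linarith [hφ0 km] : (0:ℝ) ≤ φ km + t)]
      nlinarith [mul_le_mul_of_nonneg_left hfkm ht.le, hgn, hgpos]
    have h2 := (g + t • f).norm_coe_le_norm km
    linarith
  have claim2m : ∀ t : ℝ, -ε₀ < t → t < 0 → c ≤ (‖g + t • f‖ - ‖g‖) / t := by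
    intro t ht0 ht1
    have hub : ‖g + t • f‖ ≤ ‖g‖ + t * c := by
      have hnn : (0:ℝ) ≤ ‖g‖ + t * c := by nlinarith [hε₀c, hcpos]
      refine (ContinuousMap.norm_le _ hnn).mpr fun k => ?_
      rw [hgf t k, norm_smul, Real.norm_eq_abs]
      have hgk : φ k * ‖f k‖ ≤ ‖g‖ := by
        have h := g.norm_coe_le_norm k
        rw [hgapp k, norm_smul, Real.norm_eq_abs, abs_of_nonneg (hφ0 k)] at h
        exact h
      rcases le_or_gt c (φ k * ‖f k‖) with hcase | hcase
      · have hn : c ≤ ‖f k‖ := by nlinarith [hφ1 k, norm_nonneg (f k)]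
        have hp : c ≤ φ k := by nlinarith [hfle k, hφ0 k]
        rw [abs_of_nonneg (by linarith : (0:ℝ) ≤ φ k + t)]
        nlinarith [mul_nonneg (by linarith : (0:ℝ) ≤ -t) (by linarith : (0:ℝ) ≤ ‖f k‖ - c)]
      · have habs : |φ k + t| ≤ φ k - t := by
          rw [abs_le]
          exact ⟨by linarith [hφ0 k], by linarith⟩
        have h5 := mul_le_mul_of_nonneg_right habs (norm_nonneg (f k))
        have h6 : (-t) * ‖f k‖ ≤ (-t) * 1 :=
          mul_le_mul_of_nonneg_left (hfle k) (by linarith)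
        have h7 : (-t) * (1 + c) ≤ ε₀ * (1 + c) :=
          mul_le_mul_of_nonneg_right (by linarith) (by linarith)
        nlinarith [hε₀eq]
    rw [le_div_iff_of_neg ht1]
    linarith
  have hplus : c ≤ limUnder (𝓝[>] (0:ℝ)) (fun t => (‖g + t • f‖ - ‖g‖) / t) :=
    Stmt16Aux.limUnder_plus_ge g f one_pos (fun t h1 _ => claim2p t h1)
  have hminus : c ≤ limUnder (𝓝[<] (0:ℝ)) (fun t => (‖g + t • f‖ - ‖g‖) / t) :=
    Stmt16Aux.limUnder_minus_ge g f hε₀pos (fun t h1 h2 => claim2m t h1 h2)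
  have hfinal : 0 < rhoDer g f := by
    unfold rhoDer rhoPlus rhoMinus
    nlinarith [mul_le_mul_of_nonneg_left hplus hgpos.le,
      mul_le_mul_of_nonneg_left hminus hgpos.le, mul_pos hgpos hcpos]
  linarith [hrgf, hfinal]
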